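/- Let 𝓛 assign to each finite alphabet A a collection 𝓛(A) of languages over A such that: (a) each 𝓛(A) is closed under binary union, and (b) for every length-preserving morphism φ : A* → B* (the monoid homomorphism induced by a map of letters A → B) and every L ∈ 𝓛(B), the inverse image φ⁻¹(L) lies in 𝓛(A). Suppose G and H are groups with finite symmetric generating sets X and Y respectively, each containing the identity element of its group, with Geo(G,X) ∈ 𝓛(X) and Geo(H,Y) ∈ 𝓛(Y). Then Z = {(x,y) : x ∈ X, y ∈ Y} is a finite symmetric generating set of G × H and Geo(G × H, Z) ∈ 𝓛(Z). -/

import Mathlib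

/-- `pre_{k-1}`, `suf_{k-1}` and `sub_k` agree: the equivalence `∼_k` on words. -/
def SimK {A : Type*} (k : ℕ) (u v : List A) : Prop :=
  u.take (k - 1) = v.take (k - 1) ∧
  u.drop (u.length - (k - 1)) = v.drop (v.length - (k - 1)) ∧
  ∀ s : List A, s.length = k → (s <:+: u ↔ s <:+: v)

/-- A language `L` is `k`-locally testable if membership is invariant under `∼_k`. -/
def LocallyTestable {A : Type*} (k : ℕ) (L : Set (List A)) : Prop :=
  ∀ u v : List A, SimK k u v → (u ∈ L ↔ v ∈ L)

/-- The syntactic congruence of a language: `u ∼_L v` iff `sut ∈ L ↔ svt ∈ L` for all `s, t`. -/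
def SynCong {A : Type*} (L : Set (List A)) (u v : List A) : Prop :=
  ∀ s t : List A, s ++ u ++ t ∈ L ↔ s ++ v ++ t ∈ L

/-- The element of `G` represented by a word over the generating set `X`. -/
def wordProd {G : Type*} [Group G] {X : Set G} (w : List X) : G :=
  (w.map Subtype.val).prod

/-- A word over `X` is geodesic if no word representing the same element is shorter. -/
def IsGeodesic {G : Type*} [Group G] (X : Set G) (w : List X) : Prop :=
  ∀ v : List X, wordProd v = wordProd w → w.length ≤ v.length

/-- The language of all geodesic words over `X`. -/
def Geo {G : Type*} [Group G] (X : Set G) : Set (List X) :=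
  {w | IsGeodesic X w}

/-- The `j`-th power of a word in the free monoid (concatenation of `j` copies). -/
def listPow {A : Type*} (w : List A) : ℕ → List A
  | 0 => []
  | n + 1 => w ++ listPow w n

universe u

lemma wordProd_nil {G : Type*} [Group G] {X : Set G} : wordProd ([] : List X) = 1 := rfl

lemma wordProd_cons {G : Type*} [Group G] {X : Set G} (a : X) (w : List X) :
    wordProd (a :: w) = (a : G) * wordProd w := by simp [wordProd]

lemma wordProd_append {G : Type*} [Group G] {X : Set G} (u v : List X) :
    wordProd (u ++ v) = wordProd u * wordProd v := by simp [wordProd]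

lemma wordProd_replicate_one {G : Type*} [Group G] {X : Set G} (h1 : (1:G) ∈ X) (k : ℕ) :
    wordProd (List.replicate k (⟨1, h1⟩ : X)) = 1 := by
  induction k with
  | zero => rfl
  | succ n ih => simp [List.replicate_succ, wordProd_cons, ih]

lemma wordProd_map_hom {G G' : Type*} [Group G] [Group G'] {X : Set G} {X' : Set G'}
    (φ : G →* G') (f : X → X') (hf : ∀ a : X, ((f a : G')) = φ a) (w : List X) :
    wordProd (w.map f) = φ (wordProd w) := by
  induction w with
  | nil => simp [wordProd]
  | cons a w ih => simp [wordProd_cons, hf, ih, map_mul]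

def zipZ {G H : Type*} [Group G] [Group H] {X : Set G} {Y : Set H} :
    List X → List Y → List ↥(X ×ˢ Y)
  | a :: u, b :: v => ⟨(a.1, b.1), Set.mk_mem_prod a.2 b.2⟩ :: zipZ u v
  | _, _ => []

lemma zipZ_length {G H : Type*} [Group G] [Group H] {X : Set G} {Y : Set H} :
    ∀ (u : List X) (v : List Y), u.length = v.length → (zipZ u v).length = u.length
  | [], [], _ => rfl
  | a :: u, b :: v, h => by
      simp only [zipZ, List.length_cons]
      rw [zipZ_length u v (by simpa using h)]

lemma zipZ_prod {G H : Type*} [Group G] [Group H] {X : Set G} {Y : Set H} :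
    ∀ (u : List X) (v : List Y), u.length = v.length →
      wordProd (zipZ u v) = (wordProd u, wordProd v)
  | [], [], _ => rfl
  | a :: u, b :: v, h => by
      simp only [zipZ, wordProd_cons]
      rw [zipZ_prod u v (by simpa using h)]
      rfl

/-- If a class of languages `𝓛` is closed under binary union and under inverse images of
length-preserving morphisms (induced by maps of letters), and `G`, `H` have finite
symmetric generating sets `X ∋ 1`, `Y ∋ 1` with `Geo(G,X) ∈ 𝓛(X)` and `Geo(H,Y) ∈ 𝓛(Y)`,
then `Z = X × Y` is a finite symmetric generating set of `G × H` with
`Geo(G×H,Z) ∈ 𝓛(Z)`. -/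
theorem stmt5 (𝓛 : (A : Type u) → Set (Set (List A)))
    (hunion : ∀ (A : Type u), Finite A → ∀ L₁ L₂ : Set (List A),
      L₁ ∈ 𝓛 A → L₂ ∈ 𝓛 A → L₁ ∪ L₂ ∈ 𝓛 A)
    (hinv : ∀ (A B : Type u), Finite A → Finite B → ∀ (f : A → B) (L : Set (List B)),
      L ∈ 𝓛 B → {w : List A | w.map f ∈ L} ∈ 𝓛 A)
    {G H : Type u} [Group G] [Group H] (X : Set G) (Y : Set H)
    (hXfin : X.Finite) (hXsym : ∀ x ∈ X, x⁻¹ ∈ X) (hXgen : Subgroup.closure X = ⊤)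
    (hX1 : (1 : G) ∈ X)
    (hYfin : Y.Finite) (hYsym : ∀ y ∈ Y, y⁻¹ ∈ Y) (hYgen : Subgroup.closure Y = ⊤)
    (hY1 : (1 : H) ∈ Y)
    (hGL : Geo X ∈ 𝓛 X) (hHL : Geo Y ∈ 𝓛 Y) :
    (X ×ˢ Y).Finite ∧ (∀ z ∈ X ×ˢ Y, z⁻¹ ∈ X ×ˢ Y) ∧
      Subgroup.closure (X ×ˢ Y) = ⊤ ∧ Geo (X ×ˢ Y) ∈ 𝓛 (X ×ˢ Y) := by
  have hZfin : (X ×ˢ Y).Finite := hXfin.prod hYfin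
  refine ⟨hZfin, ?_, ?_, ?_⟩
  · rintro ⟨g, h⟩ hz
    exact ⟨hXsym _ hz.1, hYsym _ hz.2⟩
  · rw [eq_top_iff]
    rintro ⟨g, h⟩ -
    have hg : ((g, (1:H)) : G × H) ∈ Subgroup.closure (X ×ˢ Y) := by
      have hle : Subgroup.closure X ≤ (Subgroup.closure (X ×ˢ Y)).comap (MonoidHom.inl G H) := by
        rw [Subgroup.closure_le]
        intro x hx
        exact Subgroup.subset_closure (Set.mk_mem_prod hx hY1)
      exact hle (by rw [hXgen]; trivial)
    have hh : (((1:G), h) : G × H) ∈ Subgroup.closure (X ×ˢ Y) := by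
      have hle : Subgroup.closure Y ≤ (Subgroup.closure (X ×ˢ Y)).comap (MonoidHom.inr G H) := by
        rw [Subgroup.closure_le]
        intro y hy
        exact Subgroup.subset_closure (Set.mk_mem_prod hX1 hy)
      exact hle (by rw [hYgen]; trivial)
    have : ((g, h) : G × H) = (g, 1) * (1, h) := by simp
    rw [this]
    exact mul_mem hg hh
  · set f : ↥(X ×ˢ Y) → ↥X := fun z => ⟨z.1.1, z.2.1⟩ with hf
    set k : ↥(X ×ˢ Y) → ↥Y := fun z => ⟨z.1.2, z.2.2⟩ with hk
    have hfp : ∀ w : List ↥(X ×ˢ Y), wordProd (w.map f) = (wordProd w).1 :=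
      fun w => wordProd_map_hom (MonoidHom.fst G H) f (fun a => rfl) w
    have hkp : ∀ w : List ↥(X ×ˢ Y), wordProd (w.map k) = (wordProd w).2 :=
      fun w => wordProd_map_hom (MonoidHom.snd G H) k (fun a => rfl) w
    have key : Geo (X ×ˢ Y) =
        {w : List ↥(X ×ˢ Y) | w.map f ∈ Geo X} ∪ {w : List ↥(X ×ˢ Y) | w.map k ∈ Geo Y} := by
      ext w
      constructor
      · intro hw
        by_contra hc
        simp only [Set.mem_union, Set.mem_setOf_eq, not_or, Geo, IsGeodesic] at hc
        obtain ⟨h1, h2⟩ := hc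
        push_neg at h1 h2
        obtain ⟨u, hu, hul⟩ := h1
        obtain ⟨v, hv, hvl⟩ := h2
        rw [List.length_map] at hul hvl
        set m := max u.length v.length with hm
        set u' := u ++ List.replicate (m - u.length) (⟨1, hX1⟩ : ↥X) with hu'
        set v' := v ++ List.replicate (m - v.length) (⟨1, hY1⟩ : ↥Y) with hv'
        have hul' : u'.length = m := by
          simp [hu', Nat.add_sub_cancel' (le_max_left _ _)]
          omega
        have hvl' : v'.length = m := by
          simp [hv', Nat.add_sub_cancel' (le_max_right _ _)]
          omega
        have hpu : wordProd u' = wordProd u := by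
          rw [hu', wordProd_append, wordProd_replicate_one, mul_one]
        have hpv : wordProd v' = wordProd v := by
          rw [hv', wordProd_append, wordProd_replicate_one, mul_one]
        have hlen : u'.length = v'.length := by rw [hul', hvl']
        have hzp : wordProd (zipZ u' v') = wordProd w := by
          rw [zipZ_prod u' v' hlen, hpu, hpv, hu, hv, hfp, hkp]
        have := hw (zipZ u' v') hzp
        rw [zipZ_length u' v' hlen, hul'] at this
        omega
      · rintro (hw | hw) <;> intro v hv
        · have := hw (v.map f) (by rw [hfp, hfp, hv])
          simpa using this
        · have := hw (v.map k) (by rw [hkp, hkp, hv])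
          simpa using this
    rw [key]
    have hXf : Finite ↥X := hXfin.to_subtype
    have hYf : Finite ↥Y := hYfin.to_subtype
    have hZf : Finite ↥(X ×ˢ Y) := hZfin.to_subtype
    exact hunion _ hZf _ _ (hinv _ _ hZf hXf f _ hGL) (hinv _ _ hZf hYf k _ hHL)
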